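/- arXiv:1007.5203 — 4 statements merged into one kernel-verified Lean document; each statement's English description precedes it below -/
import Mathlib

section
/- Let A and B be M×M matrices over the complex numbers and form the 2M×2M block matrix R with zero diagonal M×M blocks, upper-right block A, and lower-left block B. Then det(I + R) = Σ_{m=0}^{M} (−1)^m Σ_{k,l} det A(k,l) · det B(l,k), where the inner sum runs over all ordered pairs (k,l) of subsets of {1,…,M}, each of cardinality m. -/
/-- For subsets `k, l ⊆ {1,…,M}`, both of cardinality `m`, the determinant of
the `m × m` submatrix `A(k,l)` of `A` whose rows are indexed by the elements
of `k` and whose columns by the elements of `l`, each taken in increasing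
order.  (The value is `0` in the irrelevant case that `k` or `l` does not
have cardinality `m`; in the sums below the cardinalities are always `m`.) -/
noncomputable def pairMinor {M : ℕ} (A : Matrix (Fin M) (Fin M) ℂ) (m : ℕ)
    (k l : Finset (Fin M)) : ℂ :=
  if h : k.card = m ∧ l.card = m then
    (A.submatrix (fun i : Fin m => k.orderEmbOfFin h.1 i)
      (fun j : Fin m => l.orderEmbOfFin h.2 j)).det
  else 0

open Finset Equiv Matrix

lemma cb_step1 {m M : ℕ} (X : Matrix (Fin m) (Fin M) ℂ) (Y : Matrix (Fin M) (Fin m) ℂ) :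
    (X * Y).det = ∑ f : Fin m → Fin M,
      (X.submatrix id f).det * ∏ i, Y (f i) i :=
  calc
    (X * Y).det = ∑ f : Fin m → Fin M, ∑ σ : Perm (Fin m),
        ((Perm.sign σ : ℤ) : ℂ) * ∏ i, X (σ i) (f i) * Y (f i) i := by
      simp only [det_apply', mul_apply, prod_univ_sum, mul_sum, Fintype.piFinset_univ]
      rw [Finset.sum_comm]
    _ = _ := by
      refine Finset.sum_congr rfl fun f _ => ?_
      rw [det_apply', Finset.sum_mul]
      refine Finset.sum_congr rfl fun σ _ => ?_
      simp only [submatrix_apply, id_eq]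
      rw [mul_assoc, ← Finset.prod_mul_distrib]

lemma cb_step2 {m M : ℕ} (X : Matrix (Fin m) (Fin M) ℂ) (Y : Matrix (Fin M) (Fin m) ℂ) :
    (X * Y).det = ∑ f ∈ Finset.univ.filter (fun f : Fin m → Fin M => Function.Injective f),
      (X.submatrix id f).det * ∏ i, Y (f i) i := by
  rw [cb_step1]
  symm
  apply Finset.sum_subset (Finset.filter_subset _ _)
  intro f _ hf
  simp only [mem_filter, mem_univ, true_and] at hf
  obtain ⟨a, b, hab, hne⟩ := Function.not_injective_iff.mp hf
  rw [Matrix.det_zero_of_column_eq hne (fun k => by simp [hab]), zero_mul]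

lemma cauchyBinet {m M : ℕ} (X : Matrix (Fin m) (Fin M) ℂ) (Y : Matrix (Fin M) (Fin m) ℂ) :
    (X * Y).det = ∑ k ∈ Finset.powersetCard m (Finset.univ : Finset (Fin M)),
      (if h : k.card = m then
        (X.submatrix id (k.orderEmbOfFin h)).det * (Y.submatrix (k.orderEmbOfFin h) id).det
      else 0) := by
  classical
  rw [cb_step2]
  have key : ∑ p ∈ (Finset.powersetCard m (Finset.univ : Finset (Fin M))) ×ˢ
        (Finset.univ : Finset (Perm (Fin m))),
      (if h : p.1.card = m then
        ((Perm.sign p.2 : ℤ) : ℂ) * ((X.submatrix id (p.1.orderEmbOfFin h)).det *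
          ∏ i, Y (p.1.orderEmbOfFin h (p.2 i)) i)
      else 0)
      = ∑ f ∈ Finset.univ.filter (fun f : Fin m → Fin M => Function.Injective f),
        (X.submatrix id f).det * ∏ i, Y (f i) i := by
    refine Finset.sum_bij
      (fun p hp => (p.1.orderEmbOfFin (Finset.mem_powersetCard_univ.mp (Finset.mem_product.mp hp).1)) ∘ p.2)
      ?_ ?_ ?_ ?_
    · intro p hp
      simp only [mem_filter, mem_univ, true_and]
      exact (p.1.orderEmbOfFin _).injective.comp p.2.injective
    · -- injectivity
      rintro ⟨k₁, τ₁⟩ h₁ ⟨k₂, τ₂⟩ h₂ heq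
      have hc₁ := Finset.mem_powersetCard_univ.mp (Finset.mem_product.mp h₁).1
      have hc₂ := Finset.mem_powersetCard_univ.mp (Finset.mem_product.mp h₂).1
      simp only at heq hc₁ hc₂
      have r1 : Set.range (⇑(k₁.orderEmbOfFin hc₁) ∘ ⇑τ₁) = (k₁ : Set (Fin M)) := by
        rw [τ₁.surjective.range_comp, Finset.range_orderEmbOfFin]
      have r2 : Set.range (⇑(k₂.orderEmbOfFin hc₂) ∘ ⇑τ₂) = (k₂ : Set (Fin M)) := by
        rw [τ₂.surjective.range_comp, Finset.range_orderEmbOfFin]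
      have hk : k₁ = k₂ := Finset.coe_injective (by rw [← r1, ← r2, heq])
      subst hk
      have ht : τ₁ = τ₂ :=
        Equiv.ext fun i => (k₁.orderEmbOfFin hc₁).injective (congrFun heq i)
      simp [ht]
    · -- surjectivity
      intro f hfm
      have hf : Function.Injective f := by simpa using hfm
      have hck : (Finset.image f Finset.univ).card = m := by
        rw [Finset.card_image_of_injective _ hf, Finset.card_univ, Fintype.card_fin]
      have hkmem : Finset.image f Finset.univ ∈
          Finset.powersetCard m (Finset.univ : Finset (Fin M)) :=
        Finset.mem_powersetCard_univ.mpr hck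
      have hrange : Set.range f = Set.range ((Finset.image f Finset.univ).orderEmbOfFin hck) := by
        rw [Finset.range_orderEmbOfFin, Finset.coe_image, Finset.coe_univ, Set.image_univ]
      refine ⟨(Finset.image f Finset.univ,
        (Equiv.ofInjective f hf).trans ((Equiv.setCongr hrange).trans
          (Equiv.ofInjective _ ((Finset.image f Finset.univ).orderEmbOfFin hck).injective).symm)),
        Finset.mem_product.mpr ⟨hkmem, Finset.mem_univ _⟩, ?_⟩
      funext i
      simp only [Function.comp_apply, Equiv.trans_apply]
      exact Equiv.apply_ofInjective_symm _ _
    · -- values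
      rintro ⟨k, τ⟩ hp
      have hc := Finset.mem_powersetCard_univ.mp (Finset.mem_product.mp hp).1
      simp only at hc ⊢
      rw [dif_pos hc]
      have hXs : (X.submatrix id ((k.orderEmbOfFin hc) ∘ τ)) =
          (X.submatrix id (k.orderEmbOfFin hc)).submatrix id τ := rfl
      rw [hXs, Matrix.det_permute' τ]
      simp only [Function.comp_apply]
      ring
  rw [← key, Finset.sum_product]
  refine Finset.sum_congr rfl fun k hk => ?_
  have hc := Finset.mem_powersetCard_univ.mp hk
  rw [dif_pos hc]
  calc (∑ τ : Perm (Fin m),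
      if h : k.card = m then
        ((Perm.sign τ : ℤ) : ℂ) * ((X.submatrix id (k.orderEmbOfFin h)).det *
          ∏ i, Y (k.orderEmbOfFin h (τ i)) i)
      else 0)
      = ∑ τ : Perm (Fin m), (X.submatrix id (k.orderEmbOfFin hc)).det *
          (((Perm.sign τ : ℤ) : ℂ) * ∏ i, (Y.submatrix (k.orderEmbOfFin hc) id) (τ i) i) := by
        refine Finset.sum_congr rfl fun τ _ => ?_
        rw [dif_pos hc]
        simp only [submatrix_apply, id_eq]
        ring
    _ = _ := by rw [← Finset.mul_sum, ← det_apply']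

lemma pm_inner {N : ℕ} (Z : Matrix (Fin N) (Fin N) ℂ) (S : Finset (Fin N)) :
    ∑ σ : Perm (Fin N), ((Perm.sign σ : ℤ) : ℂ) *
        ((∏ i ∈ S, Z (σ i) i) * ∏ i ∈ Finset.univ \ S, (1 : Matrix (Fin N) (Fin N) ℂ) (σ i) i)
      = (Z.submatrix (S.orderEmbOfFin rfl) (S.orderEmbOfFin rfl)).det := by
  classical
  rw [det_apply']
  rw [← Finset.sum_subset
    (Finset.filter_subset (fun σ : Perm (Fin N) => ∀ i ∉ S, σ i = i) Finset.univ) ?vanish]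
  case vanish =>
    intro σ _ hσ
    simp only [mem_filter, mem_univ, true_and] at hσ
    push_neg at hσ
    obtain ⟨i, hiS, hne⟩ := hσ
    rw [Finset.prod_eq_zero (f := fun j => (1 : Matrix (Fin N) (Fin N) ℂ) (σ j) j)
      (Finset.mem_sdiff.mpr ⟨Finset.mem_univ i, hiS⟩)
      (Matrix.one_apply_ne hne), mul_zero, mul_zero]
  symm
  set e : Fin S.card ≃ {x // x ∈ S} := (S.orderIsoOfFin rfl).toEquiv with he
  refine Finset.sum_bij (fun (τ : Perm (Fin S.card)) _ => τ.extendDomain e) ?_ ?_ ?_ ?_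
  · intro τ _
    simp only [mem_filter, mem_univ, true_and]
    intro i hi
    exact Perm.extendDomain_apply_not_subtype _ _ hi
  · intro τ₁ _ τ₂ _ heq
    refine Equiv.ext fun j => ?_
    have h1 := Perm.extendDomain_apply_image (e := τ₁) (f := e) j
    have h2 := Perm.extendDomain_apply_image (e := τ₂) (f := e) j
    have heq' : τ₁.extendDomain e = τ₂.extendDomain e := heq
    have : (↑(e (τ₁ j)) : Fin N) = ↑(e (τ₂ j)) := by rw [← h1, ← h2, heq']
    exact e.injective (Subtype.ext this)
  · intro σ hσ
    simp only [mem_filter, mem_univ, true_and] at hσ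
    have hmem : ∀ x, x ∈ S ↔ σ x ∈ S := by
      intro x
      constructor
      · intro hx
        by_contra h
        have h2 : σ (σ x) = σ x := hσ _ h
        have := σ.injective h2
        rw [this] at h
        exact h hx
      · intro hx
        by_contra h
        rw [hσ _ h] at hx
        exact h hx
    refine ⟨e.symm.permCongr (σ.subtypePerm (fun x => (hmem x).symm)), Finset.mem_univ _, ?_⟩
    refine Equiv.ext fun x => ?_
    by_cases hx : x ∈ S
    · rw [Perm.extendDomain_apply_subtype _ e hx]
      simp [Equiv.permCongr_apply, Equiv.Perm.subtypePerm_apply]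
    · rw [Perm.extendDomain_apply_not_subtype _ e hx, hσ _ hx]
  · intro τ _
    rw [Perm.sign_extendDomain]
    have hone : (∏ i ∈ Finset.univ \ S,
        (1 : Matrix (Fin N) (Fin N) ℂ) ((τ.extendDomain e) i) i) = 1 := by
      refine Finset.prod_eq_one fun i hi => ?_
      rw [Perm.extendDomain_apply_not_subtype _ e (Finset.mem_sdiff.mp hi).2]
      exact Matrix.one_apply_eq i
    rw [hone, mul_one]
    congr 1
    have : (∏ i ∈ S, Z ((τ.extendDomain e) i) i)
        = ∏ i : {x // x ∈ S}, Z ((τ.extendDomain e) ↑i) ↑i := by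
      rw [← Finset.prod_coe_sort]
    rw [this, ← Equiv.prod_comp e (fun i : {x // x ∈ S} => Z ((τ.extendDomain e) ↑i) ↑i)]
    refine Finset.prod_congr rfl fun j _ => ?_
    rw [Perm.extendDomain_apply_image]
    simp only [submatrix_apply]
    rw [← Finset.coe_orderIsoOfFin_apply, ← Finset.coe_orderIsoOfFin_apply]
    rfl

lemma pm_expand {N : ℕ} (Z : Matrix (Fin N) (Fin N) ℂ) :
    (1 + Z).det = ∑ S ∈ (Finset.univ : Finset (Fin N)).powerset,
      (Z.submatrix (S.orderEmbOfFin rfl) (S.orderEmbOfFin rfl)).det := by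
  classical
  calc (1 + Z).det
      = ∑ σ : Perm (Fin N), ((Perm.sign σ : ℤ) : ℂ) *
          ∑ S ∈ (Finset.univ : Finset (Fin N)).powerset,
            (∏ i ∈ S, Z (σ i) i) * ∏ i ∈ Finset.univ \ S,
              (1 : Matrix (Fin N) (Fin N) ℂ) (σ i) i := by
        rw [det_apply']
        refine Finset.sum_congr rfl fun σ _ => ?_
        rw [show (∏ i, (1 + Z) (σ i) i)
            = ∏ i, (Z (σ i) i + (1 : Matrix (Fin N) (Fin N) ℂ) (σ i) i) from
          Finset.prod_congr rfl fun i _ => by rw [Matrix.add_apply, add_comm]]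
        rw [Finset.prod_add]
    _ = ∑ S ∈ (Finset.univ : Finset (Fin N)).powerset, ∑ σ : Perm (Fin N),
          ((Perm.sign σ : ℤ) : ℂ) * ((∏ i ∈ S, Z (σ i) i) * ∏ i ∈ Finset.univ \ S,
            (1 : Matrix (Fin N) (Fin N) ℂ) (σ i) i) := by
        simp only [Finset.mul_sum]
        rw [Finset.sum_comm]
    _ = _ := Finset.sum_congr rfl fun S _ => pm_inner Z S

/-- Corollary 5.3 at `t = 1`:
`det(I + [[0,A],[B,0]]) = Σ_{m=0}^{M} (−1)^m Σ_{k,l} det A(k,l) · det B(l,k)`,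
the inner sum running over all pairs of subsets of `{1,…,M}` of cardinality `m`. -/
theorem det_one_add_offDiagBlock_eq_sum_minors (M : ℕ)
    (A B : Matrix (Fin M) (Fin M) ℂ) :
    (1 + Matrix.fromBlocks 0 A B 0).det =
      ∑ m ∈ Finset.range (M + 1), (-1 : ℂ) ^ m *
        ∑ k ∈ Finset.powersetCard m (Finset.univ : Finset (Fin M)),
          ∑ l ∈ Finset.powersetCard m (Finset.univ : Finset (Fin M)),
            pairMinor A m k l * pairMinor B m l k := by
  classical
  have h0 : (1 : Matrix (Fin M ⊕ Fin M) (Fin M ⊕ Fin M) ℂ) + Matrix.fromBlocks 0 A B 0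
      = Matrix.fromBlocks 1 A B 1 := by
    rw [← Matrix.fromBlocks_one, Matrix.fromBlocks_add]
    simp
  rw [h0, Matrix.det_fromBlocks_one₁₁]
  have h1 : (1 : Matrix (Fin M) (Fin M) ℂ) - B * A = 1 + (-(B * A)) := sub_eq_add_neg _ _
  rw [h1, pm_expand, Finset.sum_powerset]
  rw [Finset.card_univ, Fintype.card_fin]
  refine Finset.sum_congr rfl fun m hm => ?_
  -- swap the double sum on the RHS
  rw [Finset.sum_comm, Finset.mul_sum]
  refine Finset.sum_congr rfl fun S hS => ?_
  have hc : S.card = m := Finset.mem_powersetCard_univ.mp hS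
  subst hc
  -- LHS: det of minor of -(B*A)
  have hneg : ((-(B * A)).submatrix (S.orderEmbOfFin rfl) (S.orderEmbOfFin rfl))
      = -((B * A).submatrix (S.orderEmbOfFin rfl) (S.orderEmbOfFin rfl)) := rfl
  rw [hneg, Matrix.det_neg, Fintype.card_fin]
  congr 1
  have hmul : ((B * A).submatrix (S.orderEmbOfFin rfl) (S.orderEmbOfFin rfl))
      = (B.submatrix (S.orderEmbOfFin rfl) id) * (A.submatrix id (S.orderEmbOfFin rfl)) := by
    ext i j
    simp [Matrix.mul_apply]
  rw [hmul, cauchyBinet]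
  refine Finset.sum_congr rfl fun k hk => ?_
  have hck : k.card = S.card := Finset.mem_powersetCard_univ.mp hk
  rw [dif_pos hck]
  rw [pairMinor, pairMinor, dif_pos ⟨hck, rfl⟩, dif_pos ⟨rfl, hck⟩]
  rw [mul_comm]
  rfl
end

section
/- Let A and B be M×M matrices over the complex numbers. Then det(I_M − A·B) = Σ_{m=0}^{M} (−1)^m Σ_{k,l} det A(k,l) · det B(l,k), where the inner sum runs over all ordered pairs (k,l) of subsets of {1,…,M}, each of cardinality m, and the m = 0 term contributes 1. -/
open Finset Matrix

/-- Expansion of `det (P * Q)` as a sum over all functions `Fin m → Fin M`. -/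
lemma det_mul_expand {m M : ℕ} (P : Matrix (Fin m) (Fin M) ℂ)
    (Q : Matrix (Fin M) (Fin m) ℂ) :
    (P * Q).det = ∑ f : Fin m → Fin M,
      (∏ i, P i (f i)) * (Q.submatrix f id).det := by
  have h1 : (P * Q).det
      = Matrix.detRowAlternating (Matrix.of fun i : Fin m => ∑ x : Fin M, P i x • Q x) := by
    rw [Matrix.det]
    congr 1
    ext i j
    simp [Matrix.mul_apply]
  rw [h1]
  have h2 := (Matrix.detRowAlternating (n := Fin m) (R := ℂ)).toMultilinearMap.map_sum
    (g := fun (i : Fin m) (x : Fin M) => P i x • Q x)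
  simp only [AlternatingMap.coe_multilinearMap] at h2
  rw [show (Matrix.detRowAlternating
        (Matrix.of fun i : Fin m => ∑ x : Fin M, P i x • Q x) : ℂ)
      = Matrix.detRowAlternating (fun i : Fin m => ∑ x : Fin M, P i x • Q x) from rfl, h2]
  refine Finset.sum_congr rfl fun f _ => ?_
  have h3 := (Matrix.detRowAlternating (n := Fin m) (R := ℂ)).toMultilinearMap.map_smul_univ
    (fun i => P i (f i)) (fun i => Q (f i))
  simp only [AlternatingMap.coe_multilinearMap] at h3
  rw [h3, smul_eq_mul]
  rfl

/-- Cauchy–Binet. -/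
lemma cauchy_binet {m M : ℕ} (P : Matrix (Fin m) (Fin M) ℂ)
    (Q : Matrix (Fin M) (Fin m) ℂ) :
    (P * Q).det = ∑ l ∈ Finset.powersetCard m (Finset.univ : Finset (Fin M)),
      if h : l.card = m then
        (P.submatrix id (l.orderEmbOfFin h)).det * (Q.submatrix (l.orderEmbOfFin h) id).det
      else 0 := by
  classical
  rw [det_mul_expand]
  -- drop non-injective functions
  rw [← Finset.sum_filter_add_sum_filter_not Finset.univ (fun f => Function.Injective f)]
  have hnotinj : ∑ f ∈ Finset.univ.filter (fun f : Fin m → Fin M => ¬ Function.Injective f),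
      (∏ i, P i (f i)) * (Q.submatrix f id).det = 0 := by
    refine Finset.sum_eq_zero fun f hf => ?_
    rw [Finset.mem_filter, Function.Injective] at hf
    push_neg at hf
    obtain ⟨i, j, hij, hne⟩ := hf.2
    have : (Q.submatrix f id).det = 0 :=
      Matrix.det_zero_of_row_eq hne (by ext x; simp [hij])
    rw [this, mul_zero]
  rw [hnotinj, add_zero]
  -- group by the image
  have hmaps : ∀ f ∈ Finset.univ.filter (fun f : Fin m → Fin M => Function.Injective f),
      Finset.image f Finset.univ ∈ Finset.powersetCard m (Finset.univ : Finset (Fin M)) := by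
    intro f hf
    simp only [Finset.mem_filter, Finset.mem_univ, true_and] at hf
    simp only [Finset.mem_powersetCard_univ]
    rw [Finset.card_image_of_injective _ hf, Finset.card_univ, Fintype.card_fin]
  rw [← Finset.sum_fiberwise_of_maps_to hmaps
      (fun f : Fin m → Fin M => (∏ i, P i (f i)) * (Q.submatrix f id).det)]
  refine Finset.sum_congr rfl fun l hl => ?_
  rw [Finset.mem_powersetCard_univ] at hl
  rw [dif_pos hl]
  set e := l.orderEmbOfFin hl with he
  -- the fiber over `l` is in bijection with permutations
  rw [show (Finset.univ.filter (fun f : Fin m → Fin M => Function.Injective f)).filter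
        (fun f => Finset.image f Finset.univ = l)
      = Finset.image (fun σ : Equiv.Perm (Fin m) => (e ∘ σ : Fin m → Fin M)) Finset.univ from ?_]
  · rw [Finset.sum_image ?_]
    · -- compute the sum over permutations
      have key : ∀ σ : Equiv.Perm (Fin m),
          (∏ i, P i (e (σ i))) * ((Q.submatrix (e ∘ σ) id).det)
          = (Equiv.Perm.sign σ : ℂ) * (∏ i, P i (e (σ i))) * (Q.submatrix e id).det := by
        intro σ
        have : (Q.submatrix (e ∘ σ) id) = (Q.submatrix e id).submatrix σ id := by
          ext i j; simp
        rw [this, Matrix.det_permute]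
        ring
      simp only [Function.comp]
      calc ∑ σ : Equiv.Perm (Fin m), (∏ i, P i (e (σ i))) * (Q.submatrix (fun i => e (σ i)) id).det
          = ∑ σ : Equiv.Perm (Fin m),
            (Equiv.Perm.sign σ : ℂ) * (∏ i, P i (e (σ i))) * (Q.submatrix e id).det := by
            refine Finset.sum_congr rfl fun σ _ => ?_
            have := key σ
            exact this
        _ = (∑ σ : Equiv.Perm (Fin m), (Equiv.Perm.sign σ : ℂ) * ∏ i, P i (e (σ i)))
              * (Q.submatrix e id).det := by rw [Finset.sum_mul]
        _ = (P.submatrix id e).det * (Q.submatrix e id).det := by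
            congr 1
            rw [← Matrix.det_transpose (P.submatrix id e), Matrix.det_apply']
            rfl
    · intro σ _ τ _ hστ
      ext i
      have : e (σ i) = e (τ i) := congrFun hστ i
      exact congrArg Fin.val (e.injective this)
  · -- identify the fiber
    ext f
    simp only [Finset.mem_filter, Finset.mem_univ, true_and, Finset.mem_image]
    constructor
    · rintro ⟨hinj, himg⟩
      -- construct the permutation
      have hmem : ∀ i, f i ∈ l := by
        intro i; rw [← himg]; exact Finset.mem_image_of_mem f (Finset.mem_univ i)
      let f' : Fin m → {x // x ∈ l} := fun i => ⟨f i, hmem i⟩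
      have hf'inj : Function.Injective f' := fun a b hab => hinj (congrArg Subtype.val hab)
      have hcard : Fintype.card {x // x ∈ l} = m := by
        rw [Fintype.card_coe, hl]
      have hf'bij : Function.Bijective f' := by
        rw [Fintype.bijective_iff_injective_and_card, hcard, Fintype.card_fin]
        exact ⟨hf'inj, rfl⟩
      let eiso := l.orderIsoOfFin hl
      refine ⟨(Equiv.ofBijective f' hf'bij).trans eiso.toEquiv.symm, ?_⟩
      ext i
      simp only [Function.comp_apply, Equiv.trans_apply]
      have : e (eiso.toEquiv.symm (Equiv.ofBijective f' hf'bij i))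
          = (eiso (eiso.toEquiv.symm (Equiv.ofBijective f' hf'bij i)) : Fin M) := by
        rw [he, ← Finset.coe_orderIsoOfFin_apply]
      rw [this]
      exact congrArg (fun x : { x // x ∈ l } => ((x : Fin M) : ℕ))
        (eiso.toEquiv.apply_symm_apply ((Equiv.ofBijective f' hf'bij) i))
    · rintro ⟨σ, rfl⟩
      refine ⟨e.injective.comp σ.injective, ?_⟩
      apply Finset.eq_of_subset_of_card_le
      · intro x hx
        simp only [Finset.mem_image] at hx
        obtain ⟨i, _, rfl⟩ := hx
        exact Finset.orderEmbOfFin_mem l hl (σ i)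
      · rw [hl, Finset.card_image_of_injective _ (e.injective.comp σ.injective),
          Finset.card_univ, Fintype.card_fin]

/-- A matrix that agrees with `C` on rows in `s` and with the identity elsewhere
has determinant equal to the principal minor of `C` on `s`. -/
lemma det_piecewise {M : ℕ} (C : Matrix (Fin M) (Fin M) ℂ) (s : Finset (Fin M)) :
    (Matrix.of (s.piecewise (fun i => C i) (fun i => (1 : Matrix (Fin M) (Fin M) ℂ) i))).det
      = (C.submatrix (fun i : {x // x ∈ s} => (i : Fin M))
          (fun j : {x // x ∈ s} => (j : Fin M))).det := by
  classical
  set D := Matrix.of (s.piecewise (fun i => C i) (fun i => (1 : Matrix (Fin M) (Fin M) ℂ) i))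
  let e : {x // x ∈ s} ⊕ {x // ¬ x ∈ s} ≃ Fin M := Equiv.sumCompl (· ∈ s)
  rw [← Matrix.det_submatrix_equiv_self e D]
  have hblock : D.submatrix e e = Matrix.fromBlocks
      (C.submatrix (fun i : {x // x ∈ s} => (i : Fin M)) (fun j : {x // x ∈ s} => (j : Fin M)))
      (C.submatrix (fun i : {x // x ∈ s} => (i : Fin M)) (fun j : {x // ¬ x ∈ s} => (j : Fin M)))
      0 1 := by
    ext i j
    cases i with
    | inl i =>
      cases j with
      | inl j => simp [D, e, Finset.piecewise, i.2]
      | inr j => simp [D, e, Finset.piecewise, i.2]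
    | inr i =>
      cases j with
      | inl j =>
        have : (i : Fin M) ≠ (j : Fin M) := by
          intro h
          exact i.2 (h ▸ j.2)
        simp [D, e, Finset.piecewise, i.2, Matrix.one_apply, this]
      | inr j =>
        simp [D, e, Finset.piecewise, i.2, Matrix.one_apply, Subtype.ext_iff]
  rw [hblock, Matrix.det_fromBlocks_zero₂₁, Matrix.det_one, mul_one]

/-- Expansion of `det (1 + C)` into principal minors. -/
lemma det_one_add_expand {M : ℕ} (C : Matrix (Fin M) (Fin M) ℂ) :
    (1 + C).det = ∑ s : Finset (Fin M),
      (C.submatrix (s.orderEmbOfFin (rfl : s.card = s.card))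
        (s.orderEmbOfFin (rfl : s.card = s.card))).det := by
  classical
  rw [add_comm (1 : Matrix (Fin M) (Fin M) ℂ) C]
  have hexp : (C + 1 : Matrix (Fin M) (Fin M) ℂ).det
      = ∑ s : Finset (Fin M),
        (Matrix.detRowAlternating (n := Fin M) (R := ℂ)).toMultilinearMap
          (s.piecewise (fun i => C i) (fun i => (1 : Matrix (Fin M) (Fin M) ℂ) i)) :=
    (Matrix.detRowAlternating (n := Fin M) (R := ℂ)).toMultilinearMap.map_add_univ
      (fun i => C i) (fun i => (1 : Matrix (Fin M) (Fin M) ℂ) i)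
  rw [hexp]
  refine Finset.sum_congr rfl fun s _ => ?_
  have h2 : ((Matrix.detRowAlternating (n := Fin M) (R := ℂ)).toMultilinearMap
      (s.piecewise (fun i => C i) (fun i => (1 : Matrix (Fin M) (Fin M) ℂ) i)) : ℂ)
      = (Matrix.of (s.piecewise (fun i => C i)
          (fun i => (1 : Matrix (Fin M) (Fin M) ℂ) i))).det := rfl
  rw [h2, det_piecewise]
  -- re-index the principal minor by `Fin s.card`
  let e2 : Fin s.card ≃ {x // x ∈ s} := (s.orderIsoOfFin rfl).toEquiv
  rw [← Matrix.det_submatrix_equiv_self e2]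
  congr 1

/-- The contribution of one subset `k` of cardinality `m`. -/
lemma minor_step {M : ℕ} (A B : Matrix (Fin M) (Fin M) ℂ) (m : ℕ) (k : Finset (Fin M))
    (hk : k.card = m) :
    ((-(A * B)).submatrix (k.orderEmbOfFin (rfl : k.card = k.card))
        (k.orderEmbOfFin (rfl : k.card = k.card))).det
      = (-1 : ℂ) ^ m * ∑ l ∈ Finset.powersetCard m (Finset.univ : Finset (Fin M)),
          pairMinor A m k l * pairMinor B m l k := by
  classical
  subst hk
  have hneg : ((-(A * B)).submatrix (k.orderEmbOfFin (rfl : k.card = k.card))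
        (k.orderEmbOfFin (rfl : k.card = k.card)))
      = -((A * B).submatrix (k.orderEmbOfFin (rfl : k.card = k.card))
        (k.orderEmbOfFin (rfl : k.card = k.card))) := by
    ext i j; simp
  rw [hneg, Matrix.det_neg, Fintype.card_fin]
  congr 1
  have h2 : ((A * B).submatrix (k.orderEmbOfFin (rfl : k.card = k.card))
        (k.orderEmbOfFin (rfl : k.card = k.card)))
      = (A.submatrix (k.orderEmbOfFin (rfl : k.card = k.card)) id)
        * (B.submatrix id (k.orderEmbOfFin (rfl : k.card = k.card))) := by
    ext i j
    simp [Matrix.mul_apply]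
  rw [h2, cauchy_binet]
  refine Finset.sum_congr rfl fun l hl => ?_
  rw [Finset.mem_powersetCard_univ] at hl
  rw [dif_pos hl, pairMinor, pairMinor, dif_pos ⟨rfl, hl⟩, dif_pos ⟨hl, rfl⟩]
  simp [Matrix.submatrix_submatrix]

/-- The key identity of Theorem 5.1:
`det(I_M − A·B) = Σ_{m=0}^{M} (−1)^m Σ_{k,l} det A(k,l) · det B(l,k)`,
the inner sum running over all pairs of subsets of `{1,…,M}` of cardinality
`m`, and the `m = 0` term contributing `1`. -/
theorem det_one_sub_mul_eq_sum_minors (M : ℕ)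
    (A B : Matrix (Fin M) (Fin M) ℂ) :
    (1 - A * B).det =
      ∑ m ∈ Finset.range (M + 1), (-1 : ℂ) ^ m *
        ∑ k ∈ Finset.powersetCard m (Finset.univ : Finset (Fin M)),
          ∑ l ∈ Finset.powersetCard m (Finset.univ : Finset (Fin M)),
            pairMinor A m k l * pairMinor B m l k := by
  classical
  have h0 : (1 - A * B) = 1 + (-(A * B)) := by rw [sub_eq_add_neg]
  rw [h0, det_one_add_expand]
  -- reorganize the sum over all subsets by cardinality
  rw [show (Finset.univ : Finset (Finset (Fin M))) = (Finset.univ : Finset (Fin M)).powerset by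
    rw [Finset.powerset_univ]]
  rw [Finset.sum_powerset]
  rw [show (Finset.univ : Finset (Fin M)).card = M by
    rw [Finset.card_univ, Fintype.card_fin]]
  refine Finset.sum_congr rfl fun m hm => ?_
  rw [Finset.mul_sum]
  refine Finset.sum_congr rfl fun k hk => ?_
  rw [Finset.mem_powersetCard_univ] at hk
  exact minor_step A B m k hk
end

section
/- Let N be a positive integer, let 0 ≤ p ≤ N, let R be an N×N matrix over the complex numbers, and let J_p be the N×N diagonal matrix whose first p diagonal entries are 0 and whose remaining N−p diagonal entries are 1. Then det(J_p + R) = Σ_{n=0}^{N−p} Σ_{S} det R(S,S), where the inner sum runs over all subsets S of {1,…,N} of cardinality n + p that contain all of the indices 1,…,p. -/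
/-- The principal minor of an `N × N` complex matrix `R` indexed by a subset
`S ⊆ {1,…,N}`: the determinant of the submatrix of `R` whose rows and columns
are the elements of `S` taken in increasing order. -/
noncomputable def principalMinor {N : ℕ} (R : Matrix (Fin N) (Fin N) ℂ)
    (S : Finset (Fin N)) : ℂ :=
  (R.submatrix (fun i : Fin S.card => S.orderEmbOfFin rfl i)
    (fun i : Fin S.card => S.orderEmbOfFin rfl i)).det

lemma piecewise_det_eq_zero {N p : ℕ} (R : Matrix (Fin N) (Fin N) ℂ)
    (s : Finset (Fin N)) (i : Fin N) (hip : (i : ℕ) < p) (his : i ∉ s) :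
    Matrix.det (s.piecewise R
      (Matrix.diagonal (fun i : Fin N => if (i : ℕ) < p then (0 : ℂ) else 1))) = 0 := by
  apply Matrix.det_eq_zero_of_row_eq_zero i
  intro j
  have h1 : (s.piecewise R
      (Matrix.diagonal (fun i : Fin N => if (i : ℕ) < p then (0 : ℂ) else 1))) i j
      = Matrix.diagonal (fun i : Fin N => if (i : ℕ) < p then (0 : ℂ) else 1) i j := by
    exact congrFun (Finset.piecewise_eq_of_notMem _ _ _ his) j
  rw [h1, Matrix.diagonal_apply]
  by_cases h : i = j
  · subst h; simp [hip]
  · simp [h]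

lemma piecewise_det_eq_minor {N p : ℕ} (R : Matrix (Fin N) (Fin N) ℂ)
    (s : Finset (Fin N)) (hs : ∀ i : Fin N, (i : ℕ) < p → i ∈ s) :
    Matrix.det (s.piecewise R
      (Matrix.diagonal (fun i : Fin N => if (i : ℕ) < p then (0 : ℂ) else 1)))
      = principalMinor R s := by
  classical
  set D := Matrix.diagonal (fun i : Fin N => if (i : ℕ) < p then (0 : ℂ) else 1) with hD
  set M : Matrix (Fin N) (Fin N) ℂ := s.piecewise R D with hMdef
  set f : Fin s.card → Fin N := fun k => s.orderEmbOfFin rfl k with hf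
  set g : Fin sᶜ.card → Fin N := fun k => sᶜ.orderEmbOfFin rfl k with hg
  have hfs : ∀ k, f k ∈ s := fun k => s.orderEmbOfFin_mem rfl k
  have hgs : ∀ k, g k ∉ s := fun k => Finset.mem_compl.mp (sᶜ.orderEmbOfFin_mem rfl k)
  have hbij : Function.Bijective (Sum.elim f g) := by
    rw [Fintype.bijective_iff_injective_and_card]
    constructor
    · rintro (k | k) (l | l) h
      · exact congrArg Sum.inl ((s.orderEmbOfFin rfl).injective h)
      · simp only [Sum.elim_inl, Sum.elim_inr] at h
        exact absurd (h ▸ hfs k) (hgs l)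
      · simp only [Sum.elim_inl, Sum.elim_inr] at h
        exact absurd (hfs l) (h ▸ hgs k)
      · exact congrArg Sum.inr ((sᶜ.orderEmbOfFin rfl).injective h)
    · have h1 : s.card ≤ N := by simpa using s.card_le_univ
      simp [Finset.card_compl]
      omega
  set e : (Fin s.card ⊕ Fin sᶜ.card) ≃ Fin N := Equiv.ofBijective _ hbij with he
  rw [← Matrix.det_submatrix_equiv_self e M]
  have hM : M.submatrix e e
      = Matrix.fromBlocks (R.submatrix f f) (R.submatrix f g) 0 1 := by
    ext i j
    have heval : ∀ x, e x = Sum.elim f g x := fun x => rfl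
    cases i with
    | inl k =>
      cases j with
      | inl l =>
        simp only [Matrix.submatrix_apply, heval, Sum.elim_inl,
          Matrix.fromBlocks_apply₁₁, hMdef]
        show s.piecewise R D (f k) (f l) = _
        exact congrFun (Finset.piecewise_eq_of_mem _ _ _ (hfs k)) _
      | inr l =>
        simp only [Matrix.submatrix_apply, heval, Sum.elim_inl, Sum.elim_inr,
          Matrix.fromBlocks_apply₁₂, hMdef]
        show s.piecewise R D (f k) (g l) = _
        exact congrFun (Finset.piecewise_eq_of_mem _ _ _ (hfs k)) _
    | inr k =>
      have hkp : ¬ ((g k : ℕ) < p) := fun h => hgs k (hs _ h)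
      cases j with
      | inl l =>
        have hne : g k ≠ f l := fun h => hgs k (h ▸ hfs l)
        simp only [Matrix.submatrix_apply, heval, Sum.elim_inl, Sum.elim_inr,
          Matrix.fromBlocks_apply₂₁, hMdef]
        show s.piecewise R D (g k) (f l) = _
        refine (congrFun (Finset.piecewise_eq_of_notMem _ _ _ (hgs k)) _).trans ?_
        rw [hD,
          Matrix.diagonal_apply_ne _ hne]
        rfl
      | inr l =>
        simp only [Matrix.submatrix_apply, heval, Sum.elim_inr,
          Matrix.fromBlocks_apply₂₂, hMdef]
        show s.piecewise R D (g k) (g l) = _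
        refine (congrFun (Finset.piecewise_eq_of_notMem _ _ _ (hgs k)) _).trans ?_
        rw [hD]
        rw [Matrix.diagonal_apply, Matrix.one_apply]
        by_cases h : k = l
        · subst h; simp [not_lt.mp hkp]
        · have : g k ≠ g l := fun hgl => h ((sᶜ.orderEmbOfFin rfl).injective hgl)
          simp [h, this]
  rw [hM, Matrix.det_fromBlocks_zero₂₁, Matrix.det_one, mul_one]
  rfl

/-- Proposition 5.7: with `J_p` the diagonal matrix whose first `p` diagonal
entries are `0` and whose remaining `N − p` are `1`,
`det(J_p + R) = Σ_{n=0}^{N−p} Σ_{S} det R(S,S)`, the inner sum running over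
all subsets `S ⊆ {1,…,N}` of cardinality `n + p` containing `1,…,p`. -/
theorem det_Jp_add_eq_sum_principalMinors (N p : ℕ) (hN : 0 < N) (hp : p ≤ N)
    (R : Matrix (Fin N) (Fin N) ℂ) :
    (Matrix.diagonal (fun i : Fin N => if (i : ℕ) < p then (0 : ℂ) else 1)
        + R).det =
      ∑ n ∈ Finset.range (N - p + 1),
        ∑ S ∈ (Finset.powersetCard (n + p)
            (Finset.univ : Finset (Fin N))).filter
              (fun S => ∀ i : Fin N, (i : ℕ) < p → i ∈ S),
          principalMinor R S := by
  classical
  set D := Matrix.diagonal (fun i : Fin N => if (i : ℕ) < p then (0 : ℂ) else 1) with hD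
  have key : (D + R).det = ∑ s : Finset (Fin N), Matrix.det (s.piecewise R D) := by
    have h := (Matrix.detRowAlternating :
        (Fin N → ℂ) [⋀^Fin N]→ₗ[ℂ] ℂ).toMultilinearMap.map_add_univ
        (R : Fin N → Fin N → ℂ) (D : Fin N → Fin N → ℂ)
    rw [add_comm D R]
    exact h
  rw [key]
  have hsum : ∀ s : Finset (Fin N), Matrix.det (s.piecewise R D) =
      if ∀ i : Fin N, (i : ℕ) < p → i ∈ s then principalMinor R s else 0 := by
    intro s
    by_cases h : ∀ i : Fin N, (i : ℕ) < p → i ∈ s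
    · rw [if_pos h, piecewise_det_eq_minor R s h]
    · rw [if_neg h]
      push_neg at h
      obtain ⟨i, hip, his⟩ := h
      exact piecewise_det_eq_zero R s i hip his
  simp_rw [hsum]
  rw [show (Finset.univ : Finset (Finset (Fin N))) = (Finset.univ : Finset (Fin N)).powerset
    from (Finset.powerset_univ).symm]
  rw [Finset.sum_powerset]
  simp_rw [← Finset.sum_filter]
  rw [Finset.card_univ, Fintype.card_fin]
  -- terms with n < p vanish
  have hzero : ∀ n ∈ Finset.range (N + 1), n ∉ Finset.Ico p (N + 1) →
      ∑ S ∈ (Finset.powersetCard n (Finset.univ : Finset (Fin N))).filter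
        (fun S => ∀ i : Fin N, (i : ℕ) < p → i ∈ S), principalMinor R S = 0 := by
    intro n hn hn'
    simp only [Finset.mem_range] at hn
    simp only [Finset.mem_Ico] at hn'
    have hnp : n < p := by omega
    apply Finset.sum_eq_zero
    intro S hS
    exfalso
    simp only [Finset.mem_filter, Finset.mem_powersetCard] at hS
    obtain ⟨⟨_, hcard⟩, hcond⟩ := hS
    -- S contains the p elements of value < p
    have hsub : (Finset.univ.map (Fin.castLEEmb hp)) ⊆ S := by
      intro x hx
      simp only [Finset.mem_map, Finset.mem_univ, true_and] at hx
      obtain ⟨y, hy⟩ := hx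
      apply hcond
      rw [← hy]
      simpa using y.isLt
    have := Finset.card_le_card hsub
    simp [hcard] at this
    omega
  have hIco : Finset.Ico p (N + 1) ⊆ Finset.range (N + 1) := by
    intro x hx
    simp only [Finset.mem_Ico] at hx
    simp only [Finset.mem_range]
    omega
  rw [← Finset.sum_subset hIco (by intro x hx hx'; exact hzero x hx hx')]
  rw [Finset.sum_Ico_eq_sum_range]
  have hrange : N + 1 - p = N - p + 1 := by omega
  rw [hrange]
  apply Finset.sum_congr rfl
  intro n _
  rw [add_comm p n]
end

section
/- Let M and p be positive integers with p ≤ M, let A and B be M×M complex matrices, U a p×M complex matrix, and W an M×p complex matrix. Form the (p+2M)×(p+2M) block matrix R = [[0, 0, U],[0, 0, A],[W, B, 0]] (blocks of sizes p, M, M) and let J_p be the (p+2M)×(p+2M) diagonal matrix whose first p diagonal entries are 0 and whose remaining 2M diagonal entries are 1. Then det(J_p + R) = Σ_{m=p}^{M} (−1)^m Σ_{k,l} det U_A(k,l) · det W_B(l,k), where the inner sum runs over all pairs of subsets k, l of {1,…,M} with |k| = m − p and |l| = m; here U_A(k,l) is the m×m matrix whose first p rows are the rows of U restricted to the columns indexed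 by l, and whose remaining m − p rows are the rows of A indexed by k restricted to the columns indexed by l; and W_B(l,k) is the m×m matrix whose first p columns are the columns of W restricted to the rows indexed by l, and whose remaining m − p columns are the columns of B indexed by k restricted to the rows indexed by l (all index sets taken in increasing order). -/
/-- The `(p+2M) × (p+2M)` block matrix
`R = [[0, 0, U], [0, 0, A], [W, B, 0]]` with diagonal blocks of sizes
`p × p`, `M × M`, `M × M`. -/
noncomputable def tripleBlock {p M : ℕ} (A B : Matrix (Fin M) (Fin M) ℂ)
    (U : Matrix (Fin p) (Fin M) ℂ) (W : Matrix (Fin M) (Fin p) ℂ) :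
    Matrix (Fin p ⊕ (Fin M ⊕ Fin M)) (Fin p ⊕ (Fin M ⊕ Fin M)) ℂ :=
  Matrix.fromBlocks 0 (Matrix.fromCols 0 U) (Matrix.fromRows 0 W)
    (Matrix.fromBlocks 0 A B 0)

/-- The `(p+2M) × (p+2M)` matrix `J_p = diag(0_p, I_M, I_M)` whose first `p`
diagonal entries are `0` and whose remaining `2M` diagonal entries are `1`. -/
def Jp (p M : ℕ) :
    Matrix (Fin p ⊕ (Fin M ⊕ Fin M)) (Fin p ⊕ (Fin M ⊕ Fin M)) ℂ :=
  Matrix.fromBlocks 0 0 0 1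

/-- `det U_A(k,l)` for subsets `k, l ⊆ {1,…,M}` with `|k| = m − p` and
`|l| = m = p + (m − p)`: the determinant of the `m × m` matrix whose first
`p` rows are the rows of `U` restricted to the columns indexed by `l`, and
whose remaining `m − p` rows are the rows of `A` indexed by `k`, restricted
to the columns indexed by `l` (all index sets in increasing order).  Rows and
columns are indexed by `Fin p ⊕ Fin (m − p)`, identified with `Fin m` via the
order isomorphism `finSumFinEquiv`. -/
noncomputable def detUA {p M : ℕ} (U : Matrix (Fin p) (Fin M) ℂ)
    (A : Matrix (Fin M) (Fin M) ℂ) (m : ℕ) (k l : Finset (Fin M)) : ℂ :=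
  if h : k.card = m - p ∧ l.card = p + (m - p) then
    Matrix.det (Matrix.of (fun (i j : Fin p ⊕ Fin (m - p)) =>
      Sum.elim
        (fun ip : Fin p =>
          U ip (l.orderEmbOfFin h.2 (finSumFinEquiv j)))
        (fun iq : Fin (m - p) =>
          A (k.orderEmbOfFin h.1 iq) (l.orderEmbOfFin h.2 (finSumFinEquiv j)))
        i))
  else 0

/-- `det W_B(l,k)` for subsets `k, l ⊆ {1,…,M}` with `|k| = m − p` and
`|l| = m = p + (m − p)`: the determinant of the `m × m` matrix whose first
`p` columns are the columns of `W` restricted to the rows indexed by `l`, and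
whose remaining `m − p` columns are the columns of `B` indexed by `k`,
restricted to the rows indexed by `l` (all index sets in increasing order). -/
noncomputable def detWB {p M : ℕ} (W : Matrix (Fin M) (Fin p) ℂ)
    (B : Matrix (Fin M) (Fin M) ℂ) (m : ℕ) (k l : Finset (Fin M)) : ℂ :=
  if h : k.card = m - p ∧ l.card = p + (m - p) then
    Matrix.det (Matrix.of (fun (i j : Fin p ⊕ Fin (m - p)) =>
      Sum.elim
        (fun jp : Fin p =>
          W (l.orderEmbOfFin h.2 (finSumFinEquiv i)) jp)
        (fun jq : Fin (m - p) =>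
          B (l.orderEmbOfFin h.2 (finSumFinEquiv i)) (k.orderEmbOfFin h.1 jq))
        j))
  else 0

section Cor58Helpers

open Matrix Finset



variable {p q N : ℕ}

def emb (p : ℕ) {q N : ℕ} (k : Finset (Fin N)) (hk : k.card = q) :
    Fin p ⊕ Fin q → Fin p ⊕ Fin N :=
  Sum.map id (k.orderEmbOfFin hk)

/-- the reindexing equivalence splitting `Fin p ⊕ Fin N` along `k`. -/
noncomputable def splitEquiv (p : ℕ) {N : ℕ} (k : Finset (Fin N)) :
    ((Fin p ⊕ Fin k.card) ⊕ Fin kᶜ.card) ≃ (Fin p ⊕ Fin N) := by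
  apply Equiv.ofBijective
    (Sum.elim (emb p k rfl) (fun c => Sum.inr (kᶜ.orderEmbOfFin rfl c)))
  constructor
  · rintro (a | c) (a' | c') h
    · exact congrArg Sum.inl
        (Function.Injective.sumMap (fun _ _ h => h) (k.orderEmbOfFin rfl).injective h)
    · exfalso
      rcases a with ip | j
      · exact Sum.inl_ne_inr h
      · simp only [emb, Sum.elim_inl, Sum.elim_inr, Sum.map_inr] at h
        have h1 : (k.orderEmbOfFin rfl) j ∈ k := Finset.orderEmbOfFin_mem k rfl j
        have h2 : (kᶜ.orderEmbOfFin rfl) c' ∈ kᶜ := Finset.orderEmbOfFin_mem kᶜ rfl c'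
        rw [Sum.inr.injEq] at h
        rw [h] at h1
        exact (Finset.mem_compl.mp h2) h1
    · exfalso
      rcases a' with ip | j
      · exact Sum.inl_ne_inr h.symm
      · simp only [emb, Sum.elim_inl, Sum.elim_inr, Sum.map_inr] at h
        have h1 : (k.orderEmbOfFin rfl) j ∈ k := Finset.orderEmbOfFin_mem k rfl j
        have h2 : (kᶜ.orderEmbOfFin rfl) c ∈ kᶜ := Finset.orderEmbOfFin_mem kᶜ rfl c
        rw [Sum.inr.injEq] at h
        rw [← h] at h1
        exact (Finset.mem_compl.mp h2) h1
    · simp only [Sum.elim_inr, Sum.inr.injEq] at h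
      exact congrArg Sum.inr ((kᶜ.orderEmbOfFin rfl).injective h)
  · rintro (ip | t)
    · exact ⟨Sum.inl (Sum.inl ip), rfl⟩
    · by_cases ht : t ∈ k
      · have : t ∈ Set.range (k.orderEmbOfFin rfl) := by
          rw [Finset.range_orderEmbOfFin]; exact ht
        obtain ⟨j, hj⟩ := this
        exact ⟨Sum.inl (Sum.inr j), by simp [emb, hj]⟩
      · have : t ∈ Set.range (kᶜ.orderEmbOfFin rfl) := by
          rw [Finset.range_orderEmbOfFin]; simpa using ht
        obtain ⟨c, hc⟩ := this
        exact ⟨Sum.inr c, by simp [hc]⟩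

theorem eval_k {p N : ℕ} (X : Matrix (Fin p ⊕ Fin N) (Fin p ⊕ Fin N) ℂ) (k : Finset (Fin N)) :
    (Matrix.detRowAlternating (fun i : Fin p ⊕ Fin N =>
        (if Sum.elim (fun _ : Fin p => true) (fun iq => decide (iq ∈ k)) i then X i
         else (fromBlocks 0 0 0 1 : Matrix (Fin p ⊕ Fin N) (Fin p ⊕ Fin N) ℂ) i)) : ℂ)
      = (X.submatrix (emb p k rfl) (emb p k rfl)).det := by
  classical
  set E : Matrix (Fin p ⊕ Fin N) (Fin p ⊕ Fin N) ℂ := fromBlocks 0 0 0 1 with hE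
  have key : (Matrix.of fun i j =>
      (if Sum.elim (fun _ : Fin p => true) (fun iq => decide (iq ∈ k)) i then X i else E i) j).submatrix
        (splitEquiv p k) (splitEquiv p k)
      = fromBlocks (X.submatrix (emb p k rfl) (emb p k rfl))
          (X.submatrix (emb p k rfl) (fun c => Sum.inr (kᶜ.orderEmbOfFin rfl c))) 0 1 := by
    ext i j
    have hmemk : ∀ a : Fin p ⊕ Fin k.card,
        Sum.elim (fun _ : Fin p => true) (fun iq => decide (iq ∈ k)) (emb p k rfl a) = true := by
      rintro (ip | jj)
      · rfl
      · simp [emb, Finset.orderEmbOfFin_mem]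
    have hmemc : ∀ c : Fin kᶜ.card,
        Sum.elim (fun _ : Fin p => true) (fun iq => decide (iq ∈ k))
          (Sum.inr ((kᶜ.orderEmbOfFin rfl) c)) = false := by
      intro c
      have := Finset.orderEmbOfFin_mem kᶜ rfl c
      simp only [Sum.elim_inr, decide_eq_false_iff_not]
      exact Finset.mem_compl.mp this
    rcases i with a | c
    · have e1 : splitEquiv p k (Sum.inl a) = emb p k rfl a := rfl
      rcases j with b | c'
      · have e2 : splitEquiv p k (Sum.inl b) = emb p k rfl b := rfl
        simp only [Matrix.submatrix_apply, e1, e2, Matrix.of_apply, hmemk a, if_true,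
          fromBlocks_apply₁₁, Matrix.submatrix_apply]
      · have e2 : splitEquiv p k (Sum.inr c') = Sum.inr ((kᶜ.orderEmbOfFin rfl) c') := rfl
        simp only [Matrix.submatrix_apply, e1, e2, Matrix.of_apply, hmemk a, if_true,
          fromBlocks_apply₁₂, Matrix.submatrix_apply]
    · have e1 : splitEquiv p k (Sum.inr c) = Sum.inr ((kᶜ.orderEmbOfFin rfl) c) := rfl
      rcases j with b | c'
      · have e2 : splitEquiv p k (Sum.inl b) = emb p k rfl b := rfl
        simp only [Matrix.submatrix_apply, e1, e2, Matrix.of_apply, hmemc c,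
          Bool.false_eq_true, if_false, fromBlocks_apply₂₁, Matrix.zero_apply, hE]
        rcases b with ip | jj
        · simp [emb, fromBlocks]
        · simp only [emb, Sum.map_inr, fromBlocks_apply₂₂]
          rw [Matrix.one_apply_ne]
          intro hcontra
          have h1 := Finset.orderEmbOfFin_mem k rfl jj
          have h2 := Finset.mem_compl.mp (Finset.orderEmbOfFin_mem kᶜ rfl c)
          rw [hcontra] at h2
          exact h2 h1
      · have e2 : splitEquiv p k (Sum.inr c') = Sum.inr ((kᶜ.orderEmbOfFin rfl) c') := rfl
        simp only [Matrix.submatrix_apply, e1, e2, Matrix.of_apply, hmemc c,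
          Bool.false_eq_true, if_false, fromBlocks_apply₂₂, hE]
        by_cases hcc : c = c'
        · subst hcc; simp
        · rw [Matrix.one_apply_ne, Matrix.one_apply_ne hcc]
          exact fun hcontra => hcc ((kᶜ.orderEmbOfFin rfl).injective hcontra)
  calc (Matrix.detRowAlternating (fun i : Fin p ⊕ Fin N =>
          (if Sum.elim (fun _ : Fin p => true) (fun iq => decide (iq ∈ k)) i then X i else E i)) : ℂ)
      = (Matrix.of fun i j =>
          (if Sum.elim (fun _ : Fin p => true) (fun iq => decide (iq ∈ k)) i then X i else E i) j).det := rfl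
    _ = ((Matrix.of fun i j =>
          (if Sum.elim (fun _ : Fin p => true) (fun iq => decide (iq ∈ k)) i then X i else E i) j).submatrix
            (splitEquiv p k) (splitEquiv p k)).det :=
        (Matrix.det_submatrix_equiv_self _ _).symm
    _ = (X.submatrix (emb p k rfl) (emb p k rfl)).det := by
        rw [key, Matrix.det_fromBlocks_zero₂₁, Matrix.det_one, mul_one]

theorem minor_expansion (X : Matrix (Fin p ⊕ Fin N) (Fin p ⊕ Fin N) ℂ) :
    (fromBlocks 0 0 0 (1 : Matrix (Fin N) (Fin N) ℂ) + X).det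
      = ∑ k ∈ (univ : Finset (Fin N)).powerset,
          (X.submatrix (emb p k rfl) (emb p k rfl)).det := by
  classical
  set E : Matrix (Fin p ⊕ Fin N) (Fin p ⊕ Fin N) ℂ := fromBlocks 0 0 0 1 with hE
  set g : (Fin p ⊕ Fin N) → Bool → ((Fin p ⊕ Fin N) → ℂ) :=
    fun i b => if b then X i else E i with hg
  have h1 : (E + X).det
      = ∑ r ∈ Fintype.piFinset (fun _ : Fin p ⊕ Fin N => (univ : Finset Bool)),
          Matrix.detRowAlternating (fun i => g i (r i)) := by
    have hrows : (fun i => (E + X) i) = fun i => ∑ b ∈ (univ : Finset Bool), g i b := by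
      funext i; ext j
      simp [hg, Fintype.sum_bool, Matrix.add_apply]
      ring
    have : (E + X).det
        = Matrix.detRowAlternating.toMultilinearMap (fun i => ∑ b ∈ (univ : Finset Bool), g i b) := by
      rw [← hrows]; rfl
    rw [this, MultilinearMap.map_sum_finset]; rfl
  rw [h1]
  -- drop terms where some `inl` coordinate picks the zero row
  rw [← Finset.sum_filter_add_sum_filter_not _ (fun r => ∀ ip : Fin p, r (Sum.inl ip) = true)]
  have hzero : ∀ r ∈ (Fintype.piFinset (fun _ : Fin p ⊕ Fin N => (univ : Finset Bool))).filter
      (fun r => ¬ ∀ ip : Fin p, r (Sum.inl ip) = true),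
      (Matrix.detRowAlternating (fun i => g i (r i)) : ℂ) = 0 := by
    intro r hr
    rw [Finset.mem_filter] at hr
    obtain ⟨ip, hip⟩ := not_forall.mp hr.2
    have hip' : r (Sum.inl ip) = false := by
      cases h : r (Sum.inl ip) <;> simp_all
    have hrow : g (Sum.inl ip) (r (Sum.inl ip)) = 0 := by
      rw [hip', hg]
      simp only [Bool.false_eq_true, if_false]
      funext j
      rcases j with jp | jq <;> simp [hE, fromBlocks]
    exact Matrix.detRowAlternating.toMultilinearMap.map_coord_zero (Sum.inl ip) hrow
  rw [Finset.sum_eq_zero hzero, add_zero]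
  -- bijection with subsets k
  refine Finset.sum_nbij' (fun r => univ.filter (fun iq => r (Sum.inr iq) = true))
    (fun k => Sum.elim (fun _ => true) (fun iq => decide (iq ∈ k))) ?_ ?_ ?_ ?_ ?_
  · intro r hr
    exact Finset.mem_powerset.mpr (Finset.filter_subset _ _)
  · intro k hk
    rw [Finset.mem_filter]
    exact ⟨by simp, fun ip => rfl⟩
  · intro r hr
    rw [Finset.mem_filter] at hr
    funext i
    rcases i with ip | iq
    · simp [hr.2 ip]
    · by_cases h : r (Sum.inr iq) = true <;> simp [h]
  · intro k hk
    ext iq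
    simp
  · intro r hr
    rw [Finset.mem_filter] at hr
    have hr' : r = Sum.elim (fun _ => true)
        (fun iq => decide (iq ∈ univ.filter (fun iq => r (Sum.inr iq) = true))) := by
      funext i
      rcases i with ip | iq
      · simp [hr.2 ip]
      · by_cases h : r (Sum.inr iq) = true <;> simp [h]
    conv_lhs => rw [hr']
    exact eval_k X _



variable {p q N : ℕ}

theorem cb_step1_s8 (P : Matrix (Fin p ⊕ Fin q) (Fin N) ℂ)
    (Q : Matrix (Fin N) (Fin p ⊕ Fin q) ℂ) :
    (P * Q).det = ∑ r ∈ Fintype.piFinset (fun _ : Fin p ⊕ Fin q => (univ : Finset (Fin N))),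
        (∏ i, P i (r i)) * (Q.submatrix r id).det := by
  classical
  have hrows : (fun i => (P * Q) i) = fun i => ∑ t ∈ (univ : Finset (Fin N)), P i t • Q t := by
    funext i; ext j; simp [Matrix.mul_apply]
  have : (P * Q).det = Matrix.detRowAlternating (fun i => ∑ t ∈ (univ : Finset (Fin N)), P i t • Q t) := by
    rw [← hrows]; rfl
  rw [this]
  rw [show (Matrix.detRowAlternating (fun i => ∑ t ∈ (univ : Finset (Fin N)), P i t • Q t) : ℂ)
    = Matrix.detRowAlternating.toMultilinearMap (fun i => ∑ t ∈ (univ : Finset (Fin N)), P i t • Q t) from rfl]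
  rw [MultilinearMap.map_sum_finset]
  refine Finset.sum_congr rfl fun r _ => ?_
  have := Matrix.detRowAlternating.toMultilinearMap.map_smul_univ
    (fun i : Fin p ⊕ Fin q => P i (r i)) (fun i => Q (r i))
  rw [show (Q.submatrix r id).det = Matrix.detRowAlternating (fun i => Q (r i)) from rfl]
  simpa [smul_eq_mul] using this

theorem cb_image (l : Finset (Fin N)) (hl : l.card = p + q) (σ : Equiv.Perm (Fin p ⊕ Fin q)) :
    Finset.image (fun b => l.orderEmbOfFin hl (finSumFinEquiv (σ b))) univ = l := by
  apply Finset.coe_injective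
  rw [Finset.coe_image, Finset.coe_univ, Set.image_univ]
  have : (fun b => l.orderEmbOfFin hl (finSumFinEquiv (σ b)))
      = (l.orderEmbOfFin hl) ∘ (finSumFinEquiv : (Fin p ⊕ Fin q) ≃ Fin (p+q)) ∘ σ := rfl
  rw [this, Function.Surjective.range_comp
    ((finSumFinEquiv.surjective).comp σ.surjective), Finset.range_orderEmbOfFin]

theorem orderEmb_iso {p q N : ℕ} (s : Finset (Fin N)) (h : s.card = p + q) (x : Fin N) (hx : x ∈ s) :
    s.orderEmbOfFin h (finSumFinEquiv (finSumFinEquiv.symm ((s.orderIsoOfFin h).symm ⟨x, hx⟩))) = x := by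
  rw [Equiv.apply_symm_apply, ← Finset.coe_orderIsoOfFin_apply, OrderIso.apply_symm_apply]

theorem cb_main (P : Matrix (Fin p ⊕ Fin q) (Fin N) ℂ)
    (Q : Matrix (Fin N) (Fin p ⊕ Fin q) ℂ) :
    (P * Q).det = ∑ l ∈ (powersetCard (p + q) (univ : Finset (Fin N))).attach,
      (P.submatrix id fun j =>
        l.1.orderEmbOfFin (mem_powersetCard.mp l.2).2 (finSumFinEquiv j)).det *
      (Q.submatrix (fun i =>
        l.1.orderEmbOfFin (mem_powersetCard.mp l.2).2 (finSumFinEquiv i)) id).det := by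
  classical
  rw [cb_step1_s8]
  have hcardβ : Fintype.card (Fin p ⊕ Fin q) = p + q := by simp
  -- drop non-injective terms
  rw [← Finset.sum_filter_add_sum_filter_not _ (fun r => Function.Injective r)]
  have hzero : ∀ r ∈ (Fintype.piFinset (fun _ : Fin p ⊕ Fin q => (univ : Finset (Fin N)))).filter
      (fun r => ¬ Function.Injective r),
      (∏ i, P i (r i)) * (Q.submatrix r id).det = 0 := by
    intro r hr
    rw [Finset.mem_filter] at hr
    obtain ⟨i, j, hij, hne⟩ : ∃ i j, r i = r j ∧ i ≠ j :=
      Function.not_injective_iff.mp hr.2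
    have : (Q.submatrix r id).det = 0 :=
      Matrix.det_zero_of_row_eq hne (by ext c; simp [hij])
    rw [this, mul_zero]
  rw [Finset.sum_eq_zero hzero, add_zero]
  -- bijection with pairs (l, σ)
  rw [show ∑ l ∈ (powersetCard (p + q) (univ : Finset (Fin N))).attach,
      (P.submatrix id fun j =>
        l.1.orderEmbOfFin (mem_powersetCard.mp l.2).2 (finSumFinEquiv j)).det *
      (Q.submatrix (fun i =>
        l.1.orderEmbOfFin (mem_powersetCard.mp l.2).2 (finSumFinEquiv i)) id).det
    = ∑ x ∈ (powersetCard (p + q) (univ : Finset (Fin N))).attach ×ˢ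
        (univ : Finset (Equiv.Perm (Fin p ⊕ Fin q))),
        (∏ i, P i (x.1.1.orderEmbOfFin (mem_powersetCard.mp x.1.2).2 (finSumFinEquiv (x.2 i)))) *
        (Q.submatrix (fun i => x.1.1.orderEmbOfFin (mem_powersetCard.mp x.1.2).2
            (finSumFinEquiv (x.2 i))) id).det from ?_]
  · -- the bijection
    refine (Finset.sum_bij
      (fun (x : {l // l ∈ powersetCard (p + q) (univ : Finset (Fin N))} ×
          Equiv.Perm (Fin p ⊕ Fin q)) _ =>
        (fun b => x.1.1.orderEmbOfFin (mem_powersetCard.mp x.1.2).2 (finSumFinEquiv (x.2 b)) :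
          (Fin p ⊕ Fin q) → Fin N)) ?_ ?_ ?_ ?_).symm
    · intro x _
      rw [Finset.mem_filter]
      refine ⟨by simp, ?_⟩
      exact (x.1.1.orderEmbOfFin _).injective.comp
        (finSumFinEquiv.injective.comp x.2.injective)
    · -- injectivity of the assignment
      rintro ⟨l, σ⟩ h₁ ⟨l', σ'⟩ h₂ heq
      simp only at heq
      have hl : l.1 = l'.1 := by
        have h1 := cb_image l.1 (mem_powersetCard.mp l.2).2 σ
        have h2 := cb_image l'.1 (mem_powersetCard.mp l'.2).2 σ'
        rw [← h1, ← h2, heq]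
      obtain ⟨l, hlm⟩ := l; obtain ⟨l', hlm'⟩ := l'
      simp only at hl
      subst hl
      simp only [Prod.mk.injEq, Subtype.mk.injEq, true_and]
      ext b
      have := congrFun heq b
      simp only at this
      exact finSumFinEquiv.injective ((l.orderEmbOfFin _).injective this)
    · -- surjectivity
      intro r hr
      rw [Finset.mem_filter] at hr
      set l : Finset (Fin N) := Finset.image r univ with hldef
      have hinj := hr.2
      have hlcard : l.card = p + q := by
        rw [hldef, Finset.card_image_of_injective _ hinj, Finset.card_univ, hcardβ]
      have hlmem : l ∈ powersetCard (p + q) (univ : Finset (Fin N)) := by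
        rw [mem_powersetCard]; exact ⟨Finset.subset_univ _, hlcard⟩
      have hmem : ∀ b, r b ∈ l := fun b => Finset.mem_image_of_mem r (Finset.mem_univ b)
      -- build the permutation
      set g : (Fin p ⊕ Fin q) → (Fin p ⊕ Fin q) :=
        fun b => finSumFinEquiv.symm ((l.orderIsoOfFin hlcard).symm ⟨r b, hmem b⟩) with hgdef
      have hginj : Function.Injective g := by
        intro a b hab
        apply hinj
        have := finSumFinEquiv.symm.injective hab
        have := (l.orderIsoOfFin hlcard).symm.injective this
        simpa using this
      have hgbij : Function.Bijective g := Finite.injective_iff_bijective.mp hginj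
      refine ⟨⟨⟨l, hlmem⟩, Equiv.ofBijective g hgbij⟩, Finset.mem_product.mpr
        ⟨Finset.mem_attach _ _, Finset.mem_univ _⟩, ?_⟩
      simp only
      funext b
      exact orderEmb_iso l hlcard (r b) (hmem b)
    · intro x _
      rfl
  · -- per-l Leibniz recombination
    rw [Finset.sum_product]
    refine Finset.sum_congr rfl fun l _ => Eq.symm ?_
    set c : (Fin p ⊕ Fin q) → Fin N :=
      fun i => l.1.orderEmbOfFin (mem_powersetCard.mp l.2).2 (finSumFinEquiv i) with hcdef
    have hsub : ∀ σ : Equiv.Perm (Fin p ⊕ Fin q),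
        (Q.submatrix (fun i => c (σ i)) id).det
          = Equiv.Perm.sign σ * (Q.submatrix c id).det := by
      intro σ
      have : Q.submatrix (fun i => c (σ i)) id = (Q.submatrix c id).submatrix σ id := rfl
      rw [this, Matrix.det_permute]
    calc ∑ σ : Equiv.Perm (Fin p ⊕ Fin q),
          (∏ i, P i (c (σ i))) * (Q.submatrix (fun i => c (σ i)) id).det
        = (∑ σ : Equiv.Perm (Fin p ⊕ Fin q),
            ((Equiv.Perm.sign σ : ℤ) : ℂ) * ∏ i, (P.submatrix id c)ᵀ (σ i) i) *
            (Q.submatrix c id).det := by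
          rw [Finset.sum_mul]
          refine Finset.sum_congr rfl fun σ _ => ?_
          rw [hsub σ]
          have hprod : (∏ i, (P.submatrix id c)ᵀ (σ i) i) = ∏ i, P i (c (σ i)) := rfl
          rw [hprod]
          ring
      _ = (P.submatrix id c).det * (Q.submatrix c id).det := by
          rw [← Matrix.det_apply', Matrix.det_transpose]

/-- abstract versions of the two minors with explicit cardinality proofs -/
noncomputable def D1 {p N : ℕ} (U : Matrix (Fin p) (Fin N) ℂ) (A : Matrix (Fin N) (Fin N) ℂ)
    (q : ℕ) (k l : Finset (Fin N)) (hk : k.card = q) (hl : l.card = p + q) : ℂ :=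
  (((fromRows U A).submatrix (emb p k hk) id).submatrix id
      (fun j => l.orderEmbOfFin hl (finSumFinEquiv j))).det

noncomputable def D2 {p N : ℕ} (W : Matrix (Fin N) (Fin p) ℂ) (B : Matrix (Fin N) (Fin N) ℂ)
    (q : ℕ) (k l : Finset (Fin N)) (hk : k.card = q) (hl : l.card = p + q) : ℂ :=
  (((fromCols W B).submatrix id (emb p k hk)).submatrix
      (fun i => l.orderEmbOfFin hl (finSumFinEquiv i)) id).det

lemma D1_irrel {p N : ℕ} (U : Matrix (Fin p) (Fin N) ℂ) (A : Matrix (Fin N) (Fin N) ℂ)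
    {q q' : ℕ} (k l : Finset (Fin N)) (hk : k.card = q) (hk' : k.card = q')
    (hl : l.card = p + q) (hl' : l.card = p + q') :
    D1 U A q k l hk hl = D1 U A q' k l hk' hl' := by
  subst hk; subst hk'; rfl

lemma D2_irrel {p N : ℕ} (W : Matrix (Fin N) (Fin p) ℂ) (B : Matrix (Fin N) (Fin N) ℂ)
    {q q' : ℕ} (k l : Finset (Fin N)) (hk : k.card = q) (hk' : k.card = q')
    (hl : l.card = p + q) (hl' : l.card = p + q') :
    D2 W B q k l hk hl = D2 W B q' k l hk' hl' := by
  subst hk; subst hk'; rfl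

lemma detUA_eq_D1 {p N : ℕ} (U : Matrix (Fin p) (Fin N) ℂ) (A : Matrix (Fin N) (Fin N) ℂ)
    (m : ℕ) (k l : Finset (Fin N)) (hk : k.card = m - p) (hl : l.card = p + (m - p)) :
    detUA U A m k l = D1 U A (m - p) k l hk hl := by
  rw [detUA, dif_pos ⟨hk, hl⟩]
  congr 1
  ext i j
  rcases i with ip | iq <;> rfl

lemma detWB_eq_D2 {p N : ℕ} (W : Matrix (Fin N) (Fin p) ℂ) (B : Matrix (Fin N) (Fin N) ℂ)
    (m : ℕ) (k l : Finset (Fin N)) (hk : k.card = m - p) (hl : l.card = p + (m - p)) :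
    detWB W B m k l = D2 W B (m - p) k l hk hl := by
  rw [detWB, dif_pos ⟨hk, hl⟩]
  congr 1
  ext i j
  rcases j with jp | jq <;> rfl


end Cor58Helpers

open Matrix Finset

/-- Corollary 5.8 at `t = 1`:
`det(J_p + R) = Σ_{m=p}^{M} (−1)^m Σ_{k,l} det U_A(k,l) · det W_B(l,k)`,
where `k` runs over subsets of `{1,…,M}` of cardinality `m − p` and `l` over
subsets of cardinality `m`. -/
theorem det_Jp_add_tripleBlock_eq_sum_minors (p M : ℕ) (hp : 0 < p)
    (hM : 0 < M) (hpM : p ≤ M) (A B : Matrix (Fin M) (Fin M) ℂ)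
    (U : Matrix (Fin p) (Fin M) ℂ) (W : Matrix (Fin M) (Fin p) ℂ) :
    (Jp p M + tripleBlock A B U W).det =
      ∑ m ∈ Finset.Icc p M, (-1 : ℂ) ^ m *
        ∑ k ∈ Finset.powersetCard (m - p) (Finset.univ : Finset (Fin M)),
          ∑ l ∈ Finset.powersetCard m (Finset.univ : Finset (Fin M)),
            detUA U A m k l * detWB W B m k l := by
  classical
  set F : Matrix (Fin p ⊕ Fin M) (Fin M) ℂ := fromRows U A with hF
  set G : Matrix (Fin M) (Fin p ⊕ Fin M) ℂ := fromCols W B with hG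
  -- Step 1: reindex and Schur reduce
  have h1 : (Jp p M + tripleBlock A B U W).det
      = (fromBlocks (fromBlocks 0 0 0 1) F G (1 : Matrix (Fin M) (Fin M) ℂ)).det := by
    rw [← Matrix.det_submatrix_equiv_self (Equiv.sumAssoc (Fin p) (Fin M) (Fin M))
      (Jp p M + tripleBlock A B U W)]
    congr 1
    ext i j
    rcases i with (i | i) | i <;> rcases j with (j | j) | j <;>
      simp [Jp, tripleBlock, hF, hG, Matrix.one_apply, Equiv.sumAssoc, Matrix.add_apply,
        fromRows_apply_inl, fromRows_apply_inr, fromCols_apply_inl, fromCols_apply_inr]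
  rw [h1, Matrix.det_fromBlocks_one₂₂, sub_eq_add_neg, minor_expansion]
  -- Step 2: evaluate each principal minor with Cauchy–Binet
  have h2 : ∀ k : Finset (Fin M),
      ((-(F * G)).submatrix (emb p k rfl) (emb p k rfl)).det
        = (-1 : ℂ) ^ (p + k.card) *
            ∑ l ∈ (powersetCard (p + k.card) (univ : Finset (Fin M))).attach,
              D1 U A k.card k l.1 rfl (mem_powersetCard.mp l.2).2 *
              D2 W B k.card k l.1 rfl (mem_powersetCard.mp l.2).2 := by
    intro k
    have e1 : (-(F * G)).submatrix (emb p k rfl) (emb p k rfl)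
        = -((F * G).submatrix (emb p k rfl) (emb p k rfl)) := rfl
    have e2 : (F * G).submatrix (emb p k rfl) (emb p k rfl)
        = (F.submatrix (emb p k rfl) id) * (G.submatrix id (emb p k rfl)) := by
      ext i j; simp [Matrix.mul_apply]
    rw [e1, Matrix.det_neg, e2, cb_main]
    congr 1
    · simp
  rw [Finset.sum_congr rfl fun k _ => h2 k]
  -- convert attach sums to detUA/detWB sums
  have h3 : ∀ k : Finset (Fin M),
      (∑ l ∈ (powersetCard (p + k.card) (univ : Finset (Fin M))).attach,
        D1 U A k.card k l.1 rfl (mem_powersetCard.mp l.2).2 *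
        D2 W B k.card k l.1 rfl (mem_powersetCard.mp l.2).2)
      = ∑ l ∈ powersetCard (p + k.card) (univ : Finset (Fin M)),
          detUA U A (p + k.card) k l * detWB W B (p + k.card) k l := by
    intro k
    rw [← Finset.sum_attach (powersetCard (p + k.card) (univ : Finset (Fin M)))
      (fun l => detUA U A (p + k.card) k l * detWB W B (p + k.card) k l)]
    refine Finset.sum_congr rfl fun l _ => ?_
    have hk' : k.card = (p + k.card) - p := by omega
    have hl0 : l.1.card = p + k.card := (mem_powersetCard.mp l.2).2
    have hl' : l.1.card = p + ((p + k.card) - p) := by omega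
    rw [detUA_eq_D1 U A (p + k.card) k l.1 hk' hl', detWB_eq_D2 W B (p + k.card) k l.1 hk' hl',
      D1_irrel U A k l.1 hk' rfl hl' hl0, D2_irrel W B k l.1 hk' rfl hl' hl0]
  rw [Finset.sum_congr rfl fun k _ => congrArg (fun z => (-1 : ℂ) ^ (p + k.card) * z) (h3 k)]
  -- regroup left side by cardinality of k
  rw [Finset.powerset_card_biUnion, Finset.sum_biUnion (fun i _ j _ hij => Finset.pairwise_disjoint_powersetCard _ hij)]
  rw [show (univ : Finset (Fin M)).card = M by simp]
  have h4 : ∀ j ∈ range (M + 1), ∀ k ∈ powersetCard j (univ : Finset (Fin M)),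
      ((-1 : ℂ) ^ (p + k.card) *
        ∑ l ∈ powersetCard (p + k.card) (univ : Finset (Fin M)),
          detUA U A (p + k.card) k l * detWB W B (p + k.card) k l)
      = ((-1 : ℂ) ^ (p + j) *
        ∑ l ∈ powersetCard (p + j) (univ : Finset (Fin M)),
          detUA U A (p + j) k l * detWB W B (p + j) k l) := by
    intro j _ k hk
    rw [(mem_powersetCard.mp hk).2]
  rw [Finset.sum_congr rfl fun j hj => Finset.sum_congr rfl (h4 j hj)]
  -- now rewrite the RHS into the same shape
  have h5 : Finset.Icc p M = (Finset.Icc 0 (M - p)).map (addLeftEmbedding p) := by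
    rw [map_add_left_Icc, Nat.add_zero, Nat.add_sub_cancel' hpM]
  rw [h5, Finset.sum_map]
  have h6 : ∀ j, (addLeftEmbedding p) j = p + j := fun j => rfl
  have h7 : ∀ j : ℕ,
      ((-1 : ℂ) ^ (p + j) *
        ∑ k ∈ powersetCard (p + j - p) (univ : Finset (Fin M)),
          ∑ l ∈ powersetCard (p + j) (univ : Finset (Fin M)),
            detUA U A (p + j) k l * detWB W B (p + j) k l)
      = ∑ k ∈ powersetCard j (univ : Finset (Fin M)),
          ((-1 : ℂ) ^ (p + j) *
            ∑ l ∈ powersetCard (p + j) (univ : Finset (Fin M)),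
              detUA U A (p + j) k l * detWB W B (p + j) k l) := by
    intro j
    rw [Nat.add_sub_cancel_left, Finset.mul_sum]
  simp only [addLeftEmbedding_apply]
  rw [Finset.sum_congr rfl fun j _ => h7 j]
  -- extend the index range on the right
  rw [show Finset.Icc 0 (M - p) = range (M - p + 1) by
    ext x; simp [Nat.lt_succ_iff]]
  refine (Finset.sum_subset (Finset.range_subset_range.mpr (by omega)) ?_).symm
  intro j hjM hj
  rw [Finset.mem_range] at hjM
  rw [Finset.mem_range, not_lt] at hj
  have hempty : powersetCard (p + j) (univ : Finset (Fin M)) = ∅ := by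
    rw [Finset.powersetCard_eq_empty]
    simp only [Finset.card_univ, Fintype.card_fin]
    omega
  refine Finset.sum_eq_zero fun k _ => ?_
  rw [hempty, Finset.sum_empty, mul_zero]
end
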